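/- Let Φ be a finite crystallographic root system spanning a real vector space V, with simple roots α₁, …, α_n, coroots α̌₁, …, α̌_n, Weyl group W generated by the simple reflections s₁, …, s_n, and length function ℓ. Fix an index i and let λ ∈ V satisfy ⟨λ, α̌_i⟩ ≥ 0 and ⟨λ, α̌_j⟩ = −1 for every j ≠ i, and let λ_{a.d.} be an anti-dominant element of the orbit W·λ (i.e., ⟨λ_{a.d.}, α̌_j⟩ ≤ 0 for all j). Then the number of elements w of the set W^{J} = {w ∈ W : ℓ(w s_j) > ℓ(w) for all j ≠ i} of minimal-length coset representatives of W/W_J (where W_J is the parabolic subgroup generated by {s_j : j ≠ i}) satisfying w·λ = λ_{a.d.} is equal to the order of the stabilizer Stab_W(λ_{a.d.}) = {u ∈ W : u·λ_{a.d.} = λ_{a.d.}}. -/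

import Mathlib

/-- The length of a group element `w` with respect to a generating set `S`: the least `k`
such that `w` is a product of `k` elements of `S`. -/
noncomputable def wordLength {G : Type*} [Group G] (S : Set G) (w : G) : ℕ :=
  sInf {k | ∃ l : List G, l.length = k ∧ (∀ x ∈ l, x ∈ S) ∧ l.prod = w}

/-- A root system: a root pairing whose roots and coroots span their ambient modules
(the `RootSystem` structure of the older Mathlib, now `RootPairing` with `IsRootSystem`). -/
structure RootSystem (ι R M N : Type*) [CommRing R] [AddCommGroup M] [Module R M]
    [AddCommGroup N] [Module R N] extends RootPairing ι R M N where
  span_root_eq_top : Submodule.span R (Set.range toRootPairing.root) = ⊤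
  span_coroot_eq_top : Submodule.span R (Set.range toRootPairing.coroot) = ⊤

theorem RootSystem.rootForm_root_self_pos {ι V V' : Type*} [Fintype ι] [AddCommGroup V]
    [Module ℝ V] [AddCommGroup V'] [Module ℝ V'] (P : RootSystem ι ℝ V V') (k : ι) :
    0 < P.RootForm (P.root k) (P.root k) := by
  rw [RootPairing.rootForm_root_self]
  have h := Finset.single_le_sum (f := fun i => P.pairing k i * P.pairing k i)
    (fun i _ => mul_self_nonneg _) (Finset.mem_univ k)
  simp only [RootPairing.pairing_same] at h
  linarith

namespace CardMinRepsAux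

open Set Function

section Words

variable {G : Type*} [Group G] {S : Set G}

lemma exists_word (hinv : ∀ s ∈ S, s⁻¹ = s) {w : G} (hw : w ∈ Subgroup.closure S) :
    ∃ l : List G, (∀ x ∈ l, x ∈ S) ∧ l.prod = w := by
  induction hw using Subgroup.closure_induction with
  | mem x hx => exact ⟨[x], by simpa using hx, by simp⟩
  | one => exact ⟨[], by simp, rfl⟩
  | mul x y hx hy ihx ihy =>
      obtain ⟨l1, h1, p1⟩ := ihx
      obtain ⟨l2, h2, p2⟩ := ihy
      refine ⟨l1 ++ l2, ?_, by rw [List.prod_append, p1, p2]⟩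
      intro z hz
      rcases List.mem_append.mp hz with h | h
      · exact h1 z h
      · exact h2 z h
  | inv x hx ih =>
      obtain ⟨l, hl, pl⟩ := ih
      refine ⟨l.reverse, by simpa using hl, ?_⟩
      rw [← pl, List.prod_inv_reverse]
      congr 1
      have : l.map (fun x => x⁻¹) = l.map id := by
        apply List.map_congr_left
        intro a ha
        exact hinv a (hl a ha)
      rw [this, List.map_id]

lemma wordLength_le_length {l : List G} (hl : ∀ x ∈ l, x ∈ S) :
    wordLength S l.prod ≤ l.length :=
  Nat.sInf_le ⟨l, rfl, hl, rfl⟩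

lemma exists_word_length (hinv : ∀ s ∈ S, s⁻¹ = s) {w : G} (hw : w ∈ Subgroup.closure S) :
    ∃ l : List G, (∀ x ∈ l, x ∈ S) ∧ l.prod = w ∧ l.length = wordLength S w := by
  obtain ⟨l, hl, pl⟩ := exists_word hinv hw
  have hne : {k | ∃ l : List G, l.length = k ∧ (∀ x ∈ l, x ∈ S) ∧ l.prod = w}.Nonempty :=
    ⟨l.length, l, rfl, hl, pl⟩
  obtain ⟨l', hlen, hl', pl'⟩ := Nat.sInf_mem hne
  exact ⟨l', hl', pl', hlen⟩

end Words

variable {ι V V' : Type*} [Fintype ι] [AddCommGroup V] [Module ℝ V]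
  [AddCommGroup V'] [Module ℝ V']

section RS

variable (P : RootSystem ι ℝ V V') {n : ℕ} (β : Fin n → ι)

/-- Nonnegative combination of the simple roots. -/
def IsPos (v : V) : Prop := ∃ c : Fin n → ℝ, (∀ j, 0 ≤ c j) ∧ v = ∑ j, c j • P.root (β j)

/-- Nonpositive combination of the simple roots. -/
def IsNeg (v : V) : Prop := ∃ c : Fin n → ℝ, (∀ j, c j ≤ 0) ∧ v = ∑ j, c j • P.root (β j)

variable {P β}

lemma coords_eq (hind : LinearIndependent ℝ fun j => P.root (β j)) {c d : Fin n → ℝ}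
    (h : ∑ j, c j • P.root (β j) = ∑ j, d j • P.root (β j)) : c = d := by
  funext j
  have h0 : ∑ jj, (c jj - d jj) • P.root (β jj) = 0 := by
    simp only [sub_smul, Finset.sum_sub_distrib, h, sub_self]
  have := Fintype.linearIndependent_iff.mp hind _ h0 j
  linarith [this]

lemma IsPos.neg {v : V} (h : IsPos P β v) : IsNeg P β (-v) := by
  obtain ⟨c, hc, rfl⟩ := h
  refine ⟨fun j => -(c j), fun j => by simpa using hc j, ?_⟩
  rw [← Finset.sum_neg_distrib]
  simp [neg_smul]

lemma isPos_root (j : Fin n) : IsPos P β (P.root (β j)) := by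
  refine ⟨fun k => if k = j then 1 else 0, fun k => by positivity, ?_⟩
  simp [ite_smul, Finset.sum_ite_eq']

lemma eq_zero_of_isPos_isNeg (hind : LinearIndependent ℝ fun j => P.root (β j)) {v : V}
    (h1 : IsPos P β v) (h2 : IsNeg P β v) : v = 0 := by
  obtain ⟨c, hc, rfl⟩ := h1
  obtain ⟨d, hd, hv⟩ := h2
  have hcd := coords_eq hind hv
  have : ∀ j, c j = 0 := by
    intro j
    have h1 := hc j
    have h2 := hd j
    rw [hcd] at h1 ⊢
    linarith
  refine Finset.sum_eq_zero fun j _ => by rw [this j, zero_smul]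

lemma coroot_combo {k : ι} {c : Fin n → ℝ} (h : P.root k = ∑ j, c j • P.root (β j)) :
    ∃ (qk : ℝ) (q : Fin n → ℝ), 0 < qk ∧ (∀ j, 0 < q j) ∧
      qk • P.coroot k = ∑ j, (c j * P.RootForm (P.root (β j)) (P.root (β j))) • P.coroot (β j) := by
  refine ⟨_, fun j => P.RootForm (P.root (β j)) (P.root (β j)), P.rootForm_root_self_pos k,
    fun j => P.rootForm_root_self_pos (β j), ?_⟩
  rw [P.rootForm_self_smul_coroot k]
  conv_lhs => rw [h]
  rw [map_sum, Finset.smul_sum]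
  refine Finset.sum_congr rfl fun j _ => ?_
  rw [map_smul, smul_comm, ← P.rootForm_self_smul_coroot (β j), smul_smul]

lemma coroot_smul {k m : ι} {c : ℝ} (hc : c ≠ 0) (h : P.root k = c • P.root m) :
    c • P.coroot k = P.coroot m := by
  set q := P.RootForm (P.root m) (P.root m) with hqdef
  have hq : 0 < q := P.rootForm_root_self_pos m
  have h1 := P.rootForm_self_smul_coroot k
  have h2 := P.rootForm_self_smul_coroot m
  have hk : P.RootForm (P.root k) (P.root k) = (c * c) * q := by
    rw [h]
    simp only [map_smul, LinearMap.smul_apply, smul_eq_mul, ← hqdef]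
    ring
  have h3 : P.Polarization (P.root k) = c • P.Polarization (P.root m) := by rw [h, map_smul]
  rw [hk, h3] at h1
  have h4 : ((c * c) * q) • P.coroot k = (c * q) • P.coroot m := by
    rw [h1, smul_comm, ← h2, smul_smul, ← hqdef]
  have h5 : (c * q) • (c • P.coroot k) = (c * q) • P.coroot m := by
    rw [smul_smul, show c * q * c = (c * c) * q by ring]
    exact h4
  exact smul_right_injective V' (mul_ne_zero hc hq.ne') h5

lemma pair_reflection (m k : ι) (x : V) :
    P.toLinearMap (P.reflection m x) (P.coroot (P.reflectionPerm m k)) = P.toLinearMap x (P.coroot k) := by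
  rw [P.coroot_reflectionPerm m k, RootPairing.reflection_apply, RootPairing.coreflection_apply]
  have h2 : P.toLinearMap (P.root m) (P.coroot m) = 2 := P.root_coroot_two m
  simp only [map_sub, map_smul, LinearMap.sub_apply, LinearMap.smul_apply, smul_eq_mul,
    RootPairing.coroot', RootPairing.root', LinearMap.flip_apply] at h2 ⊢
  linear_combination (P.toLinearMap x (P.coroot m) * P.toLinearMap (P.root m) (P.coroot k)) * h2

lemma weyl_perm {S : Set (V ≃ₗ[ℝ] V)} (hS : S = Set.range fun j => P.reflection (β j))
    {w : V ≃ₗ[ℝ] V} (hw : w ∈ Subgroup.closure S) :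
    ∃ σ : Equiv.Perm ι, (∀ k, w (P.root k) = P.root (σ k)) ∧
      ∀ (x : V) (k : ι), P.toLinearMap (w x) (P.coroot (σ k)) = P.toLinearMap x (P.coroot k) := by
  induction hw using Subgroup.closure_induction with
  | mem s hs =>
      rw [hS] at hs
      obtain ⟨m, rfl⟩ := hs
      exact ⟨P.reflectionPerm (β m), fun k => (P.root_reflectionPerm (β m) k).symm,
        fun x k => pair_reflection (β m) k x⟩
  | one => exact ⟨1, fun k => rfl, fun x k => rfl⟩
  | mul x y hx hy ihx ihy =>
      obtain ⟨σ1, hr1, hp1⟩ := ihx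
      obtain ⟨σ2, hr2, hp2⟩ := ihy
      refine ⟨σ1 * σ2, fun k => ?_, fun v k => ?_⟩
      · show x (y (P.root k)) = P.root (σ1 (σ2 k))
        rw [hr2, hr1]
      · show P.toLinearMap (x (y v)) (P.coroot (σ1 (σ2 k))) = _
        rw [hp1, hp2]
  | inv x hx ih =>
      obtain ⟨σ, hr, hp⟩ := ih
      have hx1 : ∀ v, x (x⁻¹ v) = v := fun v => by
        rw [show x (x⁻¹ v) = (x * x⁻¹) v from rfl, mul_inv_cancel]; rfl
      have hx2 : ∀ v, x⁻¹ (x v) = v := fun v => by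
        rw [show x⁻¹ (x v) = (x⁻¹ * x) v from rfl, inv_mul_cancel]; rfl
      refine ⟨σ⁻¹, fun k => ?_, fun v k => ?_⟩
      · have h5 : x (P.root (σ⁻¹ k)) = P.root k := by
          rw [hr]; congr 1; exact Equiv.apply_symm_apply σ k
        rw [← h5, hx2]
      · have := hp (x⁻¹ v) (σ⁻¹ k)
        rw [hx1, Equiv.Perm.coe_inv, Equiv.apply_symm_apply] at this
        exact this.symm

lemma key (hind : LinearIndependent ℝ fun j => P.root (β j)) {k : ι} {m : Fin n}
    (hpos : IsPos P β (P.root k)) (hneg : IsNeg P β (P.reflection (β m) (P.root k))) :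
    ∃ c : ℝ, 0 < c ∧ P.root k = c • P.root (β m) := by
  obtain ⟨c, hc0, hc⟩ := hpos
  obtain ⟨d, hd0, hd⟩ := hneg
  rw [RootPairing.reflection_apply] at hd
  set p := P.coroot' (β m) (P.root k) with hp
  have hsum : ∑ j, (fun j => c j - if j = m then p else 0) j • P.root (β j)
      = ∑ j, d j • P.root (β j) := by
    simp only [sub_smul, ite_smul, zero_smul, Finset.sum_sub_distrib, Finset.sum_ite_eq',
      Finset.mem_univ, if_true]
    rw [← hc]
    exact hd
  have hcd := coords_eq hind hsum
  have hzero : ∀ j, j ≠ m → c j = 0 := by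
    intro j hj
    have h1 := congrFun hcd j
    simp only [if_neg hj, sub_zero] at h1
    have := hd0 j
    have := hc0 j
    linarith
  have hck : P.root k = c m • P.root (β m) := by
    rw [hc, Finset.sum_eq_single m]
    · intro j _ hj
      rw [hzero j hj, zero_smul]
    · intro h
      exact absurd (Finset.mem_univ m) h
  refine ⟨c m, ?_, hck⟩
  rcases lt_or_eq_of_le (hc0 m) with h | h
  · exact h
  · exfalso
    apply P.ne_zero k
    rw [hck, ← h, zero_smul]

lemma devissage {S : Set (V ≃ₗ[ℝ] V)} (hS : S = Set.range fun j => P.reflection (β j))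
    (hind : LinearIndependent ℝ fun j => P.root (β j))
    (hbase : ∀ k : ι, IsPos P β (P.root k) ∨ IsNeg P β (P.root k)) :
    ∀ l : List (V ≃ₗ[ℝ] V), (∀ x ∈ l, x ∈ S) → ∀ j : Fin n,
      IsNeg P β (l.prod (P.root (β j))) →
      ∃ l' : List (V ≃ₗ[ℝ] V), (∀ x ∈ l', x ∈ S) ∧
        l'.prod = l.prod * P.reflection (β j) ∧ l'.length + 1 = l.length := by
  intro l
  induction l with
  | nil =>
      intro _ j hneg
      exfalso
      apply P.ne_zero (β j)
      refine eq_zero_of_isPos_isNeg hind (isPos_root j) ?_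
      simpa using hneg
  | cons s t ih =>
      intro hmem j hneg
      obtain ⟨m, hm⟩ : ∃ m, P.reflection (β m) = s := by
        have := hmem s (List.mem_cons_self); rw [hS] at this; exact this
      have htmem : ∀ x ∈ t, x ∈ S := fun x hx => hmem x (List.mem_cons_of_mem s hx)
      have htW : t.prod ∈ Subgroup.closure S :=
        Subgroup.list_prod_mem _ fun x hx => Subgroup.subset_closure (htmem x hx)
      obtain ⟨σ, hr, hp⟩ := weyl_perm hS htW
      have hprod : (s :: t).prod = s * t.prod := List.prod_cons
      rcases hbase (σ (β j)) with hPos | hNeg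
      · -- the new reflection kills positivity: commutation case
        have hneg' : IsNeg P β (P.reflection (β m) (P.root (σ (β j)))) := by
          have heq : (s :: t).prod (P.root (β j))
              = P.reflection (β m) (P.root (σ (β j))) := by
            rw [hprod]
            show s (t.prod (P.root (β j))) = _
            rw [hr, hm]
          rw [← heq]
          exact hneg
        obtain ⟨c, hc0, hck⟩ := key hind hPos hneg'
        have hc : t.prod (P.root (β j)) = c • P.root (β m) := by rw [hr (β j), hck]
        have hcor : c • P.coroot (σ (β j)) = P.coroot (β m) := coroot_smul hc0.ne' hck
        have hcomm : t.prod * P.reflection (β j) = P.reflection (β m) * t.prod := by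
          apply LinearEquiv.toLinearMap_injective
          apply LinearMap.ext
          intro x
          show t.prod (P.reflection (β j) x) = P.reflection (β m) (t.prod x)
          rw [RootPairing.reflection_apply, RootPairing.reflection_apply, map_sub, map_smul, hc]
          have hpair : P.coroot' (β m) (t.prod x) = c * P.coroot' (β j) x := by
            have hlin1 : P.coroot' (β m) (t.prod x) = P.toLinearMap (t.prod x) (P.coroot (β m)) := by
              simp [RootPairing.coroot']
            have hlin2 : P.coroot' (β j) x = P.toLinearMap x (P.coroot (β j)) := by
              simp [RootPairing.coroot']
            rw [hlin1, hlin2, ← hcor, map_smul, smul_eq_mul, hp x (β j)]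
          rw [hpair, smul_smul, mul_comm]
        have hmm : P.reflection (β m) * P.reflection (β m) = 1 := by
          rw [← sq]; exact P.reflection_sq (β m)
        refine ⟨t, htmem, ?_, by simp⟩
        rw [hprod, ← hm, mul_assoc, hcomm, ← mul_assoc, hmm, one_mul]
      · -- recurse
        have hneg'' : IsNeg P β (t.prod (P.root (β j))) := by rw [hr (β j)]; exact hNeg
        obtain ⟨l', hl', hpl', hlen'⟩ := ih htmem j hneg''
        refine ⟨s :: l', ?_, ?_, by simp [← hlen']⟩
        · intro x hx
          rcases List.mem_cons.mp hx with h | h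
          · rw [h]; exact hmem s (List.mem_cons_self)
          · exact hl' x h
        · rw [List.prod_cons, hpl', hprod, mul_assoc]

lemma length_lt {S : Set (V ≃ₗ[ℝ] V)} (hS : S = Set.range fun j => P.reflection (β j))
    (hind : LinearIndependent ℝ fun j => P.root (β j))
    (hbase : ∀ k : ι, IsPos P β (P.root k) ∨ IsNeg P β (P.root k))
    {w : V ≃ₗ[ℝ] V} (hw : w ∈ Subgroup.closure S) (j : Fin n)
    (hpos : IsPos P β (w (P.root (β j)))) :
    wordLength S w < wordLength S (w * P.reflection (β j)) := by
  have hinv : ∀ s ∈ S, s⁻¹ = s := by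
    intro s hs; rw [hS] at hs; obtain ⟨m, rfl⟩ := hs; exact P.reflection_inv (β m)
  have hsj : P.reflection (β j) ∈ S := by rw [hS]; exact ⟨j, rfl⟩
  have hw' : w * P.reflection (β j) ∈ Subgroup.closure S :=
    mul_mem hw (Subgroup.subset_closure hsj)
  by_contra hcon
  push_neg at hcon
  obtain ⟨l, hl, hpl, hlen⟩ := exists_word_length hinv hw'
  have hneg : IsNeg P β (l.prod (P.root (β j))) := by
    rw [hpl]
    have h1 : (w * P.reflection (β j)) (P.root (β j)) = w (P.reflection (β j) (P.root (β j))) :=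
      rfl
    rw [h1, RootPairing.reflection_apply_self, map_neg]
    exact hpos.neg
  obtain ⟨l', hl', hpl', hlen'⟩ := devissage hS hind hbase l hl j hneg
  have hjj : P.reflection (β j) * P.reflection (β j) = 1 := by
    rw [← sq]; exact P.reflection_sq (β j)
  have hwl : l'.prod = w := by
    rw [hpl', hpl, mul_assoc, hjj, mul_one]
  have h1 : wordLength S w ≤ l'.length := by
    rw [← hwl]; exact wordLength_le_length hl'
  omega

end RS

end CardMinRepsAux

open CardMinRepsAux in
/-- docstring omitted -/
theorem card_min_reps_to_antidominant_eq_card_stabilizer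
    {ι V V' : Type*} [Fintype ι] [AddCommGroup V] [Module ℝ V]
    [AddCommGroup V'] [Module ℝ V']
    (P : RootSystem ι ℝ V V')
    (hcrys : P.IsCrystallographic)
    {n : ℕ} (β : Fin n → ι)
    (hind : LinearIndependent ℝ fun j => P.root (β j))
    (hbase : ∀ k : ι,
      (∃ c : Fin n → ℝ, (∀ j, 0 ≤ c j) ∧ P.root k = ∑ j, c j • P.root (β j)) ∨
      (∃ c : Fin n → ℝ, (∀ j, c j ≤ 0) ∧ P.root k = ∑ j, c j • P.root (β j)))
    (S : Set (V ≃ₗ[ℝ] V)) (hS : S = Set.range fun j => P.reflection (β j))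
    (hgen : Subgroup.closure S = Subgroup.closure (Set.range P.reflection))
    (i : Fin n) (lam : V)
    (hlam_i : 0 ≤ P.toLinearMap lam (P.coroot (β i)))
    (hlam_j : ∀ j, j ≠ i → P.toLinearMap lam (P.coroot (β j)) = -1)
    (lam_ad : V)
    (horb : ∃ u ∈ Subgroup.closure S, u lam = lam_ad)
    (had : ∀ j : Fin n, P.toLinearMap lam_ad (P.coroot (β j)) ≤ 0) :
    Nat.card {w : V ≃ₗ[ℝ] V | w ∈ Subgroup.closure S ∧
        (∀ j, j ≠ i → wordLength S (w * P.reflection (β j)) > wordLength S w) ∧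
        w lam = lam_ad} =
      Nat.card {u : V ≃ₗ[ℝ] V | u ∈ Subgroup.closure S ∧ u lam_ad = lam_ad} := by
  classical
  have hbase' : ∀ k : ι, IsPos P β (P.root k) ∨ IsNeg P β (P.root k) := hbase
  have hseteq : {w : V ≃ₗ[ℝ] V | w ∈ Subgroup.closure S ∧
      (∀ j, j ≠ i → wordLength S (w * P.reflection (β j)) > wordLength S w) ∧
      w lam = lam_ad} = {w : V ≃ₗ[ℝ] V | w ∈ Subgroup.closure S ∧ w lam = lam_ad} := by
    ext w
    simp only [Set.mem_setOf_eq]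
    constructor
    · rintro ⟨h1, _, h3⟩; exact ⟨h1, h3⟩
    · rintro ⟨h1, h3⟩
      refine ⟨h1, fun j hj => ?_, h3⟩
      obtain ⟨σ, hr, hp⟩ := weyl_perm (P := P) (β := β) hS h1
      have hroot : w (P.root (β j)) = P.root (σ (β j)) := hr (β j)
      rcases hbase' (σ (β j)) with hPos | hNeg
      · exact length_lt hS hind hbase' h1 j (by rw [hroot]; exact hPos)
      · exfalso
        obtain ⟨d, hd0, hd⟩ := hNeg
        obtain ⟨qk, q, hqk, hq, hcor⟩ := coroot_combo (P := P) (β := β) hd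
        have hpair : P.toLinearMap lam_ad (P.coroot (σ (β j))) = -1 := by
          rw [← h3, hp lam (β j)]
          exact hlam_j j hj
        have h5 := congrArg (fun y => P.toLinearMap lam_ad y) hcor
        simp only [map_smul, map_sum, smul_eq_mul, hpair] at h5
        have hge : 0 ≤ ∑ jj, d jj * P.RootForm (P.root (β jj)) (P.root (β jj))
            * P.toLinearMap lam_ad (P.coroot (β jj)) := by
          refine Finset.sum_nonneg fun jj _ => ?_
          have h6 := hd0 jj
          have h7 := (P.rootForm_root_self_pos (β jj)).le
          have h8 := had jj
          have h9 : d jj * P.RootForm (P.root (β jj)) (P.root (β jj)) ≤ 0 :=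
            mul_nonpos_iff.mpr (Or.inr ⟨h6, h7⟩)
          nlinarith [h9, h8]
        linarith [h5, hge]
  rw [hseteq]
  obtain ⟨u₀, hu₀W, hu₀⟩ := horb
  have hu₀inv : u₀⁻¹ lam_ad = lam := by
    rw [← hu₀, show u₀⁻¹ (u₀ lam) = (u₀⁻¹ * u₀) lam from rfl, inv_mul_cancel]; rfl
  apply Nat.card_congr
  refine ⟨fun w => ⟨w.1 * u₀⁻¹, mul_mem w.2.1 (inv_mem hu₀W), ?_⟩,
    fun u => ⟨u.1 * u₀, mul_mem u.2.1 hu₀W, ?_⟩, fun w => ?_, fun u => ?_⟩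
  · show (w.1 * u₀⁻¹) lam_ad = lam_ad
    rw [show (w.1 * u₀⁻¹) lam_ad = w.1 (u₀⁻¹ lam_ad) from rfl, hu₀inv]
    exact w.2.2
  · show (u.1 * u₀) lam = lam_ad
    rw [show (u.1 * u₀) lam = u.1 (u₀ lam) from rfl, hu₀]
    exact u.2.2
  · apply Subtype.ext
    show w.1 * u₀⁻¹ * u₀ = w.1
    rw [mul_assoc, inv_mul_cancel, mul_one]
  · apply Subtype.ext
    show u.1 * u₀ * u₀⁻¹ = u.1
    rw [mul_assoc, mul_inv_cancel, mul_one]
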